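/- arXiv:0709.1767 — 4 statements merged into one kernel-verified Lean document; each statement's English description precedes it below -/
import Mathlib

section
/- Let F be a field, let q ∈ F, let N ≥ 1, and let x_1, …, x_N ∈ F be pairwise distinct elements with x_a ≠ 1 for every a. Then ∑_{a=1}^{N} ( (1 − q²)/(x_a − 1) · ∏_{b ≠ a} (x_b − q²·x_a)/(x_b − x_a) ) = ∏_{a=1}^{N} (x_a − q²)/(x_a − 1) − 1. -/
open Polynomial Finset

lemma coeff_eq_sum_eval {F : Type*} [Field F] [DecidableEq F] (s : Finset F) (P : F[X])
    (hP : P.degree < s.card) :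
    P.coeff (s.card - 1) = ∑ a ∈ s, P.eval a * (∏ b ∈ s.erase a, (a - b))⁻¹ := by
  have hinj : Set.InjOn (id : F → F) s := Function.injective_id.injOn
  have hPe := Lagrange.eq_interpolate hinj hP
  conv_lhs => rw [hPe]
  rw [Lagrange.interpolate_apply, finset_sum_coeff]
  refine Finset.sum_congr rfl fun a ha => ?_
  rw [coeff_C_mul, id]
  congr 1
  have hb : Lagrange.basis s id a
      = C (∏ b ∈ s.erase a, (a - b)⁻¹) * Lagrange.nodal (s.erase a) id := by
    unfold Lagrange.basis Lagrange.basisDivisor Lagrange.nodal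
    rw [Finset.prod_mul_distrib, map_prod]
    rfl
  rw [hb, coeff_C_mul]
  have hdeg : (Lagrange.nodal (s.erase a) (id : F → F)).natDegree = s.card - 1 := by
    rw [Lagrange.natDegree_nodal, card_erase_of_mem ha]
  have : (Lagrange.nodal (s.erase a) (id : F → F)).coeff (s.card - 1) = 1 := by
    rw [← hdeg]; exact Lagrange.nodal_monic.coeff_natDegree
  rw [this, mul_one, ← Finset.prod_inv_distrib]

lemma prod_sub_comm {F : Type*} [Field F] (u : Finset F) (c : F) :
    ∏ b ∈ u, (c - b) = (-1 : F) ^ u.card * ∏ b ∈ u, (b - c) := by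
  rw [← Finset.prod_const, ← Finset.prod_mul_distrib]
  exact Finset.prod_congr rfl fun b _ => by ring

lemma aux_identity {F : Type*} [Field F] [DecidableEq F] (q : F) (t : Finset F)
    (h0 : (0:F) ∉ t) (h1 : (1:F) ∉ t) :
    ∑ a ∈ t, ((1 - q ^ 2) / (a - 1) * ∏ b ∈ t.erase a, (b - q ^ 2 * a) / (b - a))
      = (∏ a ∈ t, (a - q ^ 2) / (a - 1)) - 1 := by
  have h01 : (0:F) ≠ 1 := zero_ne_one
  set n := t.card with hn
  have h0s : (0:F) ∉ insert 1 t := by simp [h0, h01]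
  set s : Finset F := insert 0 (insert 1 t) with hsdef
  have hcard : s.card = n + 2 := by
    rw [hsdef, card_insert_of_notMem h0s, card_insert_of_notMem h1]
  set P : F[X] := ∏ b ∈ t, (C (-(q^2)) * X + C b) with hPdef
  have hevalP : ∀ r : F, P.eval r = ∏ b ∈ t, (b - q^2 * r) := by
    intro r
    rw [hPdef, eval_prod]
    exact Finset.prod_congr rfl fun b _ => by simp; ring
  have hdegP : P.natDegree ≤ n := by
    have hf : ∀ b ∈ t, (C (-(q^2)) * X + C b).natDegree ≤ 1 := fun b _ =>
      Polynomial.natDegree_linear_le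
    refine le_trans (Polynomial.natDegree_prod_le _ _)
      (le_trans (Finset.sum_le_sum hf) (by simp [hn]))
  have key : (0 : F) = ∑ a ∈ s, P.eval a * (∏ b ∈ s.erase a, (a - b))⁻¹ := by
    rw [← coeff_eq_sum_eval s P
      (lt_of_le_of_lt P.degree_le_natDegree (by exact_mod_cast lt_of_le_of_lt hdegP (by omega)))]
    rw [hcard]
    exact (Polynomial.coeff_eq_zero_of_natDegree_lt (by omega)).symm
  rw [hsdef, Finset.sum_insert h0s, Finset.sum_insert h1] at key
  set e : F := (-1) ^ n with hedef
  have he : e * e = 1 := by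
    rw [hedef, ← pow_add]; exact Even.neg_one_pow ⟨n, rfl⟩
  have hene : e ≠ 0 := left_ne_zero_of_mul_eq_one he
  clear_value e
  -- Term at 0
  have hA : ∏ b ∈ t, b ≠ 0 := Finset.prod_ne_zero_iff.mpr fun b hb => fun h => h0 (h ▸ hb)
  have hT0 : P.eval 0 * (∏ b ∈ (insert 0 (insert 1 t)).erase 0, ((0:F) - b))⁻¹ = -e := by
    rw [Finset.erase_insert h0s, Finset.prod_insert h1, hevalP]
    simp only [mul_zero, sub_zero]
    rw [prod_sub_comm t 0, ← hn, ← hedef]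
    simp only [sub_zero]
    field_simp
    linear_combination (-1 : F) * he
  -- Term at 1
  have hD1 : ∏ b ∈ t, (b - 1) ≠ 0 :=
    Finset.prod_ne_zero_iff.mpr fun b hb => sub_ne_zero_of_ne fun h => h1 (h ▸ hb)
  have hT1 : P.eval 1 * (∏ b ∈ (insert 0 (insert 1 t)).erase 1, ((1:F) - b))⁻¹
      = e * ∏ a ∈ t, (a - q ^ 2) / (a - 1) := by
    have h2 : ∏ b ∈ t, (b - q^2*(1:F)) = ∏ b ∈ t, (b - q^2) :=
      Finset.prod_congr rfl fun b _ => by ring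
    rw [Finset.erase_insert_of_ne h01, Finset.erase_insert h1, Finset.prod_insert h0, hevalP,
      prod_sub_comm t 1, ← hn, ← hedef, h2, Finset.prod_div_distrib]
    field_simp
    linear_combination (-(∏ b ∈ t, (b - q^2))) * he
  -- Terms at a ∈ t
  have hTa : ∀ a ∈ t, P.eval a * (∏ b ∈ (insert 0 (insert 1 t)).erase a, (a - b))⁻¹
      = -e * ((1 - q ^ 2) / (a - 1) * ∏ b ∈ t.erase a, (b - q ^ 2 * a) / (b - a)) := by
    intro a ha
    have ha0 : a ≠ 0 := fun h => h0 (h ▸ ha)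
    have ha1 : a ≠ 1 := fun h => h1 (h ▸ ha)
    have ha1' : a - 1 ≠ 0 := sub_ne_zero_of_ne ha1
    have hn1 : 1 ≤ n := Finset.card_pos.mpr ⟨a, ha⟩
    have hcarde : (t.erase a).card = n - 1 := by rw [Finset.card_erase_of_mem ha]
    have hDa : ∏ b ∈ t.erase a, (b - a) ≠ 0 :=
      Finset.prod_ne_zero_iff.mpr fun b hb => sub_ne_zero_of_ne (Finset.ne_of_mem_erase hb)
    have h0m : (0:F) ∉ insert 1 (t.erase a) := by
      intro h
      rcases Finset.mem_insert.mp h with h | h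
      · exact h01 h
      · exact h0 (Finset.mem_of_mem_erase h)
    have h1m : (1:F) ∉ t.erase a := fun h => h1 (Finset.mem_of_mem_erase h)
    rw [Finset.erase_insert_of_ne (Ne.symm ha0), Finset.erase_insert_of_ne (Ne.symm ha1), hevalP,
      Finset.prod_insert h0m, Finset.prod_insert h1m,
      ← Finset.mul_prod_erase t _ ha, prod_sub_comm (t.erase a) a, hcarde,
      Finset.prod_div_distrib]
    have heq : e = -(-1:F)^(n-1) := by
      have hps : (-1:F)^(n-1) * (-1) = (-1)^n := by
        rw [← pow_succ, Nat.sub_add_cancel hn1]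
      rw [hedef, ← hps]; ring
    rw [heq]
    set ea : F := (-1:F)^(n-1) with headef
    have heaea : ea * ea = 1 := by rw [headef, ← pow_add]; exact Even.neg_one_pow ⟨n-1, rfl⟩
    have hea0 : ea ≠ 0 := left_ne_zero_of_mul_eq_one heaea
    clear_value ea
    field_simp
    linear_combination (-(a * (1 - q^2) * ∏ b ∈ t.erase a, (b - a * q^2))) * heaea
  rw [hT0, hT1, Finset.sum_congr rfl hTa] at key
  rw [← Finset.mul_sum] at key
  set S := ∑ a ∈ t, ((1 - q ^ 2) / (a - 1) * ∏ b ∈ t.erase a, (b - q ^ 2 * a) / (b - a)) with hS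
  set Q := ∏ a ∈ t, (a - q ^ 2) / (a - 1) with hQ
  linear_combination e * key + (Q - S - 1) * he

/-- Let `F` be a field, `q ∈ F`, `N ≥ 1`, and let `x_1, …, x_N ∈ F` be pairwise distinct
elements with `x_a ≠ 1` for every `a`.  Then
`∑_{a=1}^{N} ((1 − q²)/(x_a − 1) · ∏_{b ≠ a} (x_b − q²·x_a)/(x_b − x_a))
  = ∏_{a=1}^{N} (x_a − q²)/(x_a − 1) − 1`. -/
theorem residue_identity {F : Type*} [Field F] (q : F) (N : ℕ) (hN : 1 ≤ N)
    (x : Fin N → F) (hdist : Function.Injective x) (hx1 : ∀ a, x a ≠ 1) :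
    ∑ a : Fin N, ((1 - q ^ 2) / (x a - 1) *
        ∏ b ∈ Finset.univ.erase a, (x b - q ^ 2 * x a) / (x b - x a))
      = (∏ a : Fin N, (x a - q ^ 2) / (x a - 1)) - 1 := by
  classical
  set T : Finset F := Finset.image x Finset.univ with hT
  have h1T : (1:F) ∉ T := by
    rw [hT]; simp only [Finset.mem_image]; rintro ⟨a, -, h⟩; exact hx1 a h
  have himg : ∀ a : Fin N, (Finset.univ.erase a).image x = T.erase (x a) := by
    intro a; rw [hT, ← Finset.image_erase hdist]
  have hLHS : ∑ a : Fin N, ((1 - q ^ 2) / (x a - 1) *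
        ∏ b ∈ Finset.univ.erase a, (x b - q ^ 2 * x a) / (x b - x a))
      = ∑ y ∈ T, ((1 - q ^ 2) / (y - 1) * ∏ b ∈ T.erase y, (b - q ^ 2 * y) / (b - y)) := by
    rw [hT, Finset.sum_image (fun a _ b _ h => hdist h)]
    refine Finset.sum_congr rfl fun a _ => ?_
    rw [← himg a, Finset.prod_image (fun u _ v _ h => hdist h)]
  have hRHS : ∏ a : Fin N, (x a - q ^ 2) / (x a - 1)
      = ∏ y ∈ T, (y - q ^ 2) / (y - 1) := by
    rw [hT, Finset.prod_image (fun u _ v _ h => hdist h)]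
  rw [hLHS, hRHS]
  by_cases h0T : (0:F) ∈ T
  · set t := T.erase 0 with ht
    have h0t : (0:F) ∉ t := Finset.notMem_erase _ _
    have h1t : (1:F) ∉ t := fun h => h1T (Finset.mem_of_mem_erase h)
    have hTi : T = insert 0 t := (Finset.insert_erase h0T).symm
    rw [hTi, Finset.sum_insert (Finset.notMem_erase _ _),
      Finset.prod_insert (Finset.notMem_erase _ _)]
    have hf0 : (1 - q ^ 2) / ((0:F) - 1) * ∏ b ∈ (insert 0 t).erase 0, (b - q ^ 2 * 0) / (b - 0)
        = q ^ 2 - 1 := by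
      rw [Finset.erase_insert h0t]
      have hone : ∏ b ∈ t, (b - q ^ 2 * (0:F)) / (b - 0) = 1 :=
        Finset.prod_eq_one fun b hb => by
          have hb0 : b ≠ 0 := fun h => h0t (h ▸ hb)
          rw [mul_zero, sub_zero, div_self hb0]
      rw [hone, mul_one, div_eq_iff (show (0:F) - 1 ≠ 0 by norm_num)]; ring
    rw [hf0]
    have hstep : ∀ a ∈ t,
        (1 - q ^ 2) / (a - 1) * ∏ b ∈ (insert 0 t).erase a, (b - q ^ 2 * a) / (b - a)
        = q ^ 2 * ((1 - q ^ 2) / (a - 1) * ∏ b ∈ t.erase a, (b - q ^ 2 * a) / (b - a)) := by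
      intro a ha
      have ha0 : a ≠ 0 := fun h => h0t (h ▸ ha)
      rw [Finset.erase_insert_of_ne (Ne.symm ha0),
        Finset.prod_insert (fun h => h0t (Finset.mem_of_mem_erase h))]
      have hq2 : ((0:F) - q ^ 2 * a) / (0 - a) = q ^ 2 := by
        rw [div_eq_iff (sub_ne_zero_of_ne (Ne.symm ha0))]; ring
      rw [hq2]; ring
    rw [Finset.sum_congr rfl hstep, ← Finset.mul_sum, aux_identity q t h0t h1t]
    have hc : ((0:F) - q ^ 2) / ((0:F) - 1) = q ^ 2 := by
      rw [div_eq_iff (show (0:F) - 1 ≠ 0 by norm_num)]; ring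
    rw [hc]; ring
  · exact aux_identity q T h0T h1T
end

section
/- Let k = (k_1, k_2, …) be a Maya diagram with charge c and let a ≥ 1 be an index with k_a + 1 ∉ k. Then k_a + a − c ≥ 0, and the node (a−1, k_a + a − c) is an addable node of the Young diagram λ(k), and its content equals c − k_a − 1. -/
noncomputable section

/-- A Young diagram, as a set of nodes: a finite lower set in `ℕ × ℕ`. -/
def SIsYoung (S : Set (ℕ × ℕ)) : Prop :=
  S.Finite ∧ ∀ p ∈ S, ∀ x y : ℕ, x ≤ p.1 → y ≤ p.2 → (x, y) ∈ S

/-- The content `x - y` of a node `(x,y)`. -/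
def content (p : ℕ × ℕ) : ℤ := (p.1 : ℤ) - (p.2 : ℤ)

/-- `p` is an addable node of `S`. -/
def SAddable (S : Set (ℕ × ℕ)) (p : ℕ × ℕ) : Prop :=
  p ∉ S ∧ SIsYoung (insert p S)

/-- `p` is a removable node of `S`. -/
def SRemovable (S : Set (ℕ × ℕ)) (p : ℕ × ℕ) : Prop :=
  p ∈ S ∧ SIsYoung (S \ {p})

/-- `k` (with `k a` meaning `k_a`, for `a ≥ 1`) is a Maya diagram with charge `c`:
a strictly decreasing sequence of integers with `k_a = c - a` for large `a`. -/
def IsMaya (c : ℤ) (k : ℕ → ℤ) : Prop :=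
  (∀ a : ℕ, 1 ≤ a → k (a + 1) < k a) ∧ ∃ M : ℕ, ∀ a : ℕ, M ≤ a → k a = c - a

/-- `v` belongs to the Maya diagram `k`, viewed as the subset `{k_1, k_2, …} ⊆ ℤ`. -/
def memMaya (k : ℕ → ℤ) (v : ℤ) : Prop := ∃ a : ℕ, 1 ≤ a ∧ k a = v

/-- The Young diagram `λ(k) = {(a-1, b-1) : a ≥ 1, 1 ≤ b ≤ k_a + a - c}`
associated to a Maya diagram with charge `c`. -/
def mayaSet (c : ℤ) (k : ℕ → ℤ) : Set (ℕ × ℕ) :=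
  {p | (p.2 : ℤ) + 1 ≤ k (p.1 + 1) + (p.1 + 1) - c}

lemma fmono (k : ℕ → ℤ) (hd : ∀ a : ℕ, 1 ≤ a → k (a + 1) < k a) :
    ∀ a b : ℕ, 1 ≤ b → b ≤ a → k a + a ≤ k b + b := by
  intro a
  induction a with
  | zero => intro b hb hba; omega
  | succ n ih =>
    intro b hb hba
    rcases eq_or_lt_of_le hba with h | h
    · subst h; exact le_refl _
    · have hbn : b ≤ n := by omega
      have h1 : 1 ≤ n := le_trans hb hbn
      have h2 := hd n h1
      have h3 := ih b hb hbn
      push_cast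
      omega

theorem stmt5 (c : ℤ) (k : ℕ → ℤ) (hk : IsMaya c k) (a : ℕ) (ha : 1 ≤ a)
    (h : ¬ memMaya k (k a + 1)) :
    0 ≤ k a + a - c ∧
    SAddable (mayaSet c k) (a - 1, (k a + a - c).toNat) ∧
    content (a - 1, (k a + a - c).toNat) = c - k a - 1 := by
  obtain ⟨hd, M, hM⟩ := hk
  -- f b := k b + b is weakly decreasing, eventually equal to c
  have hmono := fmono k hd
  set N : ℕ := max M a with hN
  have hNa : a ≤ N := le_max_right _ _
  have hfN : k N + (N : ℤ) = c := by
    have := hM N (le_max_left _ _)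
    omega
  have hpos : 0 ≤ k a + a - c := by
    have := hmono N a ha hNa
    omega
  -- strict decrease below a
  have hstrict : ∀ b : ℕ, 1 ≤ b → b < a → k a + (a : ℤ) + 1 ≤ k b + b := by
    intro b hb hba
    have ha2 : 2 ≤ a := by omega
    have hsucc : k ((a - 1) + 1) < k (a - 1) := hd (a - 1) (by omega)
    have heq : (a - 1) + 1 = a := by omega
    rw [heq] at hsucc
    have hne : k (a - 1) ≠ k a + 1 := by
      intro hc
      exact h ⟨a - 1, by omega, hc⟩
    have h2 : k a + 2 ≤ k (a - 1) := by omega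
    have h3 := hmono (a - 1) b hb (by omega)
    have : ((a - 1 : ℕ) : ℤ) = (a : ℤ) - 1 := by omega
    omega
  set t : ℕ := (k a + a - c).toNat with ht
  have htz : (t : ℤ) = k a + a - c := Int.toNat_of_nonneg hpos
  have hpred : ((a - 1 : ℕ) : ℤ) = (a : ℤ) - 1 := by omega
  -- the Young diagram is finite
  have hfin : (mayaSet c k).Finite := by
    set N' : ℕ := max M 1 with hN'
    set B : ℕ := (k 1 + 1 - c).toNat with hB
    apply Set.Finite.subset ((Set.finite_Iio N').prod (Set.finite_Iio B))
    rintro ⟨x, y⟩ hp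
    simp only [mayaSet, Set.mem_setOf_eq] at hp
    constructor
    · simp only [Set.mem_Iio]
      by_contra hx
      push_neg at hx
      have : k (x + 1) = c - (x + 1) := hM (x + 1) (by omega)
      push_cast at this hp
      omega
    · simp only [Set.mem_Iio]
      have := hmono (x + 1) 1 le_rfl (by omega)
      push_cast at this hp
      omega
  refine ⟨hpos, ⟨?_, Set.Finite.insert _ hfin, ?_⟩, ?_⟩
  · -- not a member
    simp only [mayaSet, Set.mem_setOf_eq]
    rw [hpred]
    have heq : a - 1 + 1 = a := by omega
    rw [heq]
    omega
  · -- lower set property of insert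
    rintro ⟨px, py⟩ hp x y hx hy
    simp only [Set.mem_insert_iff, Prod.mk.injEq] at hp ⊢
    rcases hp with ⟨h1, h2⟩ | hp
    · -- p is the new node
      simp only at hx hy
      subst h1 h2
      by_cases hxa : x = a - 1
      · subst hxa
        rcases eq_or_lt_of_le hy with hy' | hy'
        · left; exact ⟨rfl, hy'⟩
        · right
          simp only [mayaSet, Set.mem_setOf_eq]
          have heq : a - 1 + 1 = a := by omega
          rw [heq]
          push_cast [hpred]
          omega
      · -- x < a - 1
        right
        simp only [mayaSet, Set.mem_setOf_eq]
        have hx1 : x + 1 < a := by omega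
        have := hstrict (x + 1) (by omega) hx1
        have hyt : y ≤ t := hy
        push_cast at this ⊢
        omega
    · -- p was already in the set
      right
      simp only [mayaSet, Set.mem_setOf_eq] at hp ⊢
      have := hmono (px + 1) (x + 1) (by omega) (by omega)
      push_cast at this hp ⊢
      omega
  · -- content
    simp only [content]
    rw [hpred, htz]
    ring


end
end

section
/- Let k be a Maya diagram with charge c. Then the set H = {(u,v) ∈ ℤ × ℤ : u ∈ k, v ∉ k, u > v} is finite, and there is a bijection between H and the set of hooks of the Young diagram λ(k) under which the pair (u,v) corresponds to a hook of hook length u − v. -/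
noncomputable section

/-- The hook length `-x_h + y_h + x_t - y_t` of a pair of nodes. -/
def hookLen (hk : (ℕ × ℕ) × (ℕ × ℕ)) : ℤ :=
  -(hk.1.1 : ℤ) + hk.1.2 + hk.2.1 - hk.2.2

/-- `hk = ((x_h,y_h),(x_t,y_t))` is a hook of `S`. -/
def SIsHook (S : Set (ℕ × ℕ)) (hk : (ℕ × ℕ) × (ℕ × ℕ)) : Prop :=
  (hk.1.1, hk.1.2 - 1) ∈ S ∧ hk.1 ∉ S ∧ hk.2 ∈ S ∧ (hk.2.1 + 1, hk.2.2) ∉ S ∧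
    0 < hookLen hk

namespace Stmt6Aux

variable {c : ℤ} {k : ℕ → ℤ}

lemma k_strict (hk : IsMaya c k) : ∀ a b : ℕ, 1 ≤ a → a < b → k b < k a := by
  intro a b ha hab
  induction b with
  | zero => omega
  | succ n ih =>
    rcases Nat.lt_or_ge a n with h | h
    · exact lt_trans (hk.1 n (by omega)) (ih h)
    · have hh : a = n := by omega
      subst hh
      exact hk.1 a ha

lemma k_mono (hk : IsMaya c k) : ∀ a b : ℕ, 1 ≤ a → a ≤ b → k b ≤ k a := by
  intro a b ha hab
  rcases Nat.lt_or_ge a b with h | h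
  · exact le_of_lt (k_strict hk a b ha h)
  · have : a = b := by omega
    subst this; exact le_rfl

lemma k_inj (hk : IsMaya c k) {a b : ℕ} (ha : 1 ≤ a) (hb : 1 ≤ b)
    (h : k a = k b) : a = b := by
  rcases lt_trichotomy a b with h' | h' | h'
  · have := k_strict hk a b ha h'; omega
  · exact h'
  · have := k_strict hk b a hb h'; omega

lemma k_ge (hk : IsMaya c k) : ∀ b : ℕ, 1 ≤ b → c - b ≤ k b := by
  obtain ⟨M, hM⟩ := hk.2
  have key : ∀ d b : ℕ, 1 ≤ b → M ≤ b + d → c - b ≤ k b := by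
    intro d
    induction d with
    | zero =>
      intro b hb hMb
      rw [hM b (by omega)]
    | succ n ih =>
      intro b hb hMb
      by_cases hbM : M ≤ b
      · rw [hM b hbM]
      · have h1 := ih (b + 1) (by omega) (by omega)
        have h2 := hk.1 b hb
        push_cast at h1 ⊢
        omega
  intro b hb
  exact key M b hb (by omega)

lemma k_tail (hk : IsMaya c k) {a : ℕ} (ha : 1 ≤ a) (hka : k a = c - a) :
    ∀ b : ℕ, a ≤ b → k b = c - b := by
  intro b hb
  induction b, hb using Nat.le_induction with
  | base => exact hka
  | succ n hn ih =>
    have h1 := hk.1 n (by omega)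
    have h2 := k_ge hk (n + 1) (by omega)
    push_cast at h2 ⊢
    omega

/-- If `u` is a bead, `v < u` is a gap, and `a` is the index of `u`,
then row `a` of the Young diagram is nonempty. -/
lemma row_pos (hk : IsMaya c k) {u v : ℤ} (hv : ¬ memMaya k v) (hvu : v < u)
    {a : ℕ} (ha1 : 1 ≤ a) (hau : k a = u) : 1 ≤ u + a - c := by
  by_contra h
  have h0 : c - a ≤ k a := k_ge hk a ha1
  have hka : k a = c - (a : ℤ) := by omega
  apply hv
  refine ⟨a + (u - v).toNat, by omega, ?_⟩
  rw [k_tail hk ha1 hka (a + (u - v).toNat) (by omega)]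
  push_cast
  omega

/-- The index of the first bead `≤ v` (i.e. one more than the number of beads above `v`). -/
def mIdx (k : ℕ → ℤ) (v : ℤ) : ℕ := sInf {n : ℕ | 1 ≤ n ∧ k n ≤ v}

lemma mIdx_mem (hk : IsMaya c k) (v : ℤ) : 1 ≤ mIdx k v ∧ k (mIdx k v) ≤ v := by
  obtain ⟨M, hM⟩ := hk.2
  have hne : (M + 1 + (c - v).toNat) ∈ {n : ℕ | 1 ≤ n ∧ k n ≤ v} := by
    refine ⟨by omega, ?_⟩
    rw [hM _ (by omega)]
    push_cast
    omega
  exact Nat.sInf_mem ⟨_, hne⟩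

lemma mIdx_min {v : ℤ} {n : ℕ} (h1 : 1 ≤ n) (h2 : n < mIdx k v) : v < k n := by
  have := Nat.notMem_of_lt_sInf (s := {n : ℕ | 1 ≤ n ∧ k n ≤ v}) h2
  simp only [Set.mem_setOf_eq, not_and, not_le] at this
  exact this h1

open Classical in
def aIdx (k : ℕ → ℤ) (u : ℤ) : ℕ :=
  if h : ∃ a : ℕ, 1 ≤ a ∧ k a = u then h.choose else 1

lemma aIdx_spec {u : ℤ} (h : memMaya k u) : 1 ≤ aIdx k u ∧ k (aIdx k u) = u := by
  have h' : ∃ a : ℕ, 1 ≤ a ∧ k a = u := h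
  rw [aIdx, dif_pos h']
  exact h'.choose_spec

/-- The bijection from pairs (bead, gap) to hooks. -/
def mayaF (c : ℤ) (k : ℕ → ℤ) (uv : ℤ × ℤ) : (ℕ × ℕ) × (ℕ × ℕ) :=
  ((aIdx k uv.1 - 1, (uv.1 + aIdx k uv.1 - c).toNat),
   (mIdx k uv.2 - 2, ((mIdx k uv.2 : ℤ) + uv.2 - 1 - c).toNat))

end Stmt6Aux

open Stmt6Aux

theorem stmt6 (c : ℤ) (k : ℕ → ℤ) (hk : IsMaya c k) :
    ({uv : ℤ × ℤ | memMaya k uv.1 ∧ ¬ memMaya k uv.2 ∧ uv.2 < uv.1}).Finite ∧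
    ∃ f : ℤ × ℤ → (ℕ × ℕ) × (ℕ × ℕ),
      Set.BijOn f {uv : ℤ × ℤ | memMaya k uv.1 ∧ ¬ memMaya k uv.2 ∧ uv.2 < uv.1}
        {hk' | SIsHook (mayaSet c k) hk'} ∧
      ∀ uv ∈ {uv : ℤ × ℤ | memMaya k uv.1 ∧ ¬ memMaya k uv.2 ∧ uv.2 < uv.1},
        hookLen (f uv) = uv.1 - uv.2 := by
  constructor
  · -- Finiteness
    obtain ⟨M, hM⟩ := hk.2
    apply Set.Finite.subset
      (((Set.finite_Icc (c - M) (k 1)).prod (Set.finite_Icc (c - M) (k 1))))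
    rintro ⟨u, v⟩ ⟨⟨a, ha1, hau⟩, hv, hvu⟩
    have hvlb : c - M ≤ v := by
      by_contra h
      push_neg at h
      apply hv
      refine ⟨(c - v).toNat, by omega, ?_⟩
      rw [hM _ (by omega)]
      omega
    have hub : u ≤ k 1 := by
      have := k_mono hk 1 a le_rfl ha1
      omega
    constructor <;> simp only [Set.mem_Icc] <;> omega
  · refine ⟨mayaF c k, ?_⟩
    -- key facts for elements of the source set
    have hfacts : ∀ u v : ℤ, memMaya k u → ¬ memMaya k v → v < u →
        SIsHook (mayaSet c k) (mayaF c k (u, v)) ∧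
          hookLen (mayaF c k (u, v)) = u - v := by
      intro u v hu hv hvu
      obtain ⟨ha1, hau⟩ := aIdx_spec (k := k) hu
      set a := aIdx k u with hadef
      obtain ⟨hm1, hkmle⟩ := mIdx_mem hk v
      set m := mIdx k v with hmdef
      have hkm : k m < v := lt_of_le_of_ne hkmle (fun h => hv ⟨m, hm1, h⟩)
      have hm2 : 2 ≤ m := by
        rcases Nat.lt_or_ge m 2 with h | h
        · exfalso
          have hm1' : m = 1 := by omega
          have h1 : k 1 ≤ v := by rw [← hm1']; exact hkmle
          have h2 : k a ≤ k 1 := k_mono hk 1 a le_rfl ha1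
          omega
        · exact h
      have hm3 : v < k (m - 1) := mIdx_min (by omega) (by omega)
      have hmc : c - v + 1 ≤ m := by
        have := k_ge hk m (by omega)
        omega
      have hy1 : 1 ≤ u + a - c := row_pos hk hv hvu ha1 hau
      have hyh : ((u + a - c).toNat : ℤ) = u + a - c := Int.toNat_of_nonneg (by omega)
      have hyt : (((m : ℤ) + v - 1 - c).toNat : ℤ) = (m : ℤ) + v - 1 - c :=
        Int.toNat_of_nonneg (by omega)
      have hxa : a - 1 + 1 = a := by omega
      have hxm1 : m - 2 + 1 = m - 1 := by omega
      have hxm2 : m - 1 + 1 = m := by omega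
      have hcm1 : ((m - 1 : ℕ) : ℤ) = (m : ℤ) - 1 := by omega
      have hcm2 : ((m - 2 : ℕ) : ℤ) = (m : ℤ) - 2 := by omega
      have hca : ((a - 1 : ℕ) : ℤ) = (a : ℤ) - 1 := by omega
      constructor
      · refine ⟨?_, ?_, ?_, ?_, ?_⟩
        · -- (x_h, y_h - 1) ∈ S
          show ((((u + a - c).toNat - 1 : ℕ)) : ℤ) + 1 ≤
            k (a - 1 + 1) + ((a - 1 : ℕ) + 1 : ℕ) - c
          rw [hxa, hau]
          push_cast [hca]
          omega
        · -- (x_h, y_h) ∉ S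
          show ¬ ((((u + a - c).toNat : ℕ)) : ℤ) + 1 ≤
            k (a - 1 + 1) + ((a - 1 : ℕ) + 1 : ℕ) - c
          rw [hxa, hau]
          push_cast [hca]
          omega
        · -- (x_t, y_t) ∈ S
          show (((((m : ℤ) + v - 1 - c).toNat : ℕ)) : ℤ) + 1 ≤
            k (m - 2 + 1) + ((m - 2 : ℕ) + 1 : ℕ) - c
          rw [hxm1]
          push_cast [hcm2]
          omega
        · -- (x_t + 1, y_t) ∉ S
          show ¬ (((((m : ℤ) + v - 1 - c).toNat : ℕ)) : ℤ) + 1 ≤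
            k (m - 2 + 1 + 1) + ((m - 2 + 1 : ℕ) + 1 : ℕ) - c
          rw [hxm1, hxm2]
          push_cast [hcm1]
          omega
        · -- positive hook length
          show 0 < -(((a - 1 : ℕ)) : ℤ) + ((u + a - c).toNat : ℤ) +
            ((m - 2 : ℕ) : ℤ) - (((m : ℤ) + v - 1 - c).toNat : ℤ)
          rw [hyh, hyt, hca, hcm2]
          omega
      · show -(((a - 1 : ℕ)) : ℤ) + ((u + a - c).toNat : ℤ) +
            ((m - 2 : ℕ) : ℤ) - (((m : ℤ) + v - 1 - c).toNat : ℤ) = u - v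
        rw [hyh, hyt, hca, hcm2]
        ring
    constructor
    · constructor
      · -- MapsTo
        rintro ⟨u, v⟩ ⟨hu, hv, hvu⟩
        exact (hfacts u v hu hv hvu).1
      constructor
      · -- InjOn
        rintro ⟨u, v⟩ ⟨hu, hv, hvu⟩ ⟨u', v'⟩ ⟨hu', hv', hvu'⟩ heq
        dsimp only at hu hv hvu hu' hv' hvu'
        obtain ⟨ha1, hau⟩ := aIdx_spec (k := k) hu
        obtain ⟨ha1', hau'⟩ := aIdx_spec (k := k) hu'
        simp only [mayaF, Prod.mk.injEq] at heq
        obtain ⟨⟨heq1, heq2⟩, heq3, heq4⟩ := heq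
        have haa : aIdx k u = aIdx k u' := by omega
        have huu : u = u' := by
          have hkk : k (aIdx k u) = k (aIdx k u') := congrArg k haa
          omega
        -- second components
        obtain ⟨hm1, hkmle⟩ := mIdx_mem hk v
        obtain ⟨hm1', hkmle'⟩ := mIdx_mem hk v'
        have hkm : k (mIdx k v) < v := lt_of_le_of_ne hkmle (fun h => hv ⟨_, hm1, h⟩)
        have hkm' : k (mIdx k v') < v' := lt_of_le_of_ne hkmle' (fun h => hv' ⟨_, hm1', h⟩)
        have hmc : c - v + 1 ≤ mIdx k v := by
          have := k_ge hk (mIdx k v) (by omega); omega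
        have hmc' : c - v' + 1 ≤ mIdx k v' := by
          have := k_ge hk (mIdx k v') (by omega); omega
        -- m ≥ 2 on both sides
        have hm2 : 2 ≤ mIdx k v := by
          rcases Nat.lt_or_ge (mIdx k v) 2 with h | h
          · exfalso
            have hm1'' : mIdx k v = 1 := by omega
            have h1 : k 1 ≤ v := by rw [← hm1'']; exact hkmle
            have h2 : k (aIdx k u) ≤ k 1 := k_mono hk 1 _ le_rfl ha1
            omega
          · exact h
        have hm2' : 2 ≤ mIdx k v' := by
          rcases Nat.lt_or_ge (mIdx k v') 2 with h | h
          · exfalso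
            have hm1'' : mIdx k v' = 1 := by omega
            have h1 : k 1 ≤ v' := by rw [← hm1'']; exact hkmle'
            have h2 : k (aIdx k u') ≤ k 1 := k_mono hk 1 _ le_rfl ha1'
            omega
          · exact h
        have hvv : v = v' := by omega
        rw [huu, hvv]
      · -- SurjOn
        rintro ⟨⟨xh, yh⟩, ⟨xt, yt⟩⟩ hhook
        obtain ⟨h1, h2, h3, h4, h5⟩ := hhook
        simp only [mayaSet, Set.mem_setOf_eq, not_le] at h1 h2 h3 h4
        -- y_h ≥ 1
        have hyh1 : 1 ≤ yh := by
          by_contra h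
          have : yh = 0 := by omega
          subst this
          exact absurd h1 (by simpa using h2)
        have h1' : (yh : ℤ) ≤ k (xh + 1) + (xh + 1) - c := by
          have : ((yh - 1 : ℕ) : ℤ) = (yh : ℤ) - 1 := by omega
          rw [this] at h1
          push_cast at h1 ⊢
          omega
        have h2' : k (xh + 1) + (xh + 1) - c ≤ (yh : ℤ) := by
          push_cast at h2 ⊢
          omega
        have hyheq : (yh : ℤ) = k (xh + 1) + (xh + 1) - c := le_antisymm h1' h2'
        set u := k (xh + 1) with hudef
        set v := (yt : ℤ) - (xt : ℤ) + c - 1 with hvdef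
        have h3' : v + 1 ≤ k (xt + 1) := by
          push_cast at h3
          omega
        have h4' : k (xt + 2) ≤ v - 1 := by
          have hxx : xt + 1 + 1 = xt + 2 := by omega
          rw [hxx] at h4
          push_cast at h4
          omega
        have hu : memMaya k u := ⟨xh + 1, by omega, rfl⟩
        have hv : ¬ memMaya k v := by
          rintro ⟨b, hb1, hb2⟩
          rcases Nat.lt_or_ge b (xt + 2) with hb | hb
          · have : k (xt + 1) ≤ k b := k_mono hk b (xt + 1) hb1 (by omega)
            omega
          · have : k b ≤ k (xt + 2) := k_mono hk (xt + 2) b (by omega) hb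
            omega
        have hvu : v < u := by
          have h5' : (0:ℤ) < -(xh:ℤ) + (yh:ℤ) + (xt:ℤ) - (yt:ℤ) := h5
          omega
        refine ⟨(u, v), ⟨hu, hv, hvu⟩, ?_⟩
        -- compute mayaF at (u, v)
        obtain ⟨ha1, hau⟩ := aIdx_spec (k := k) hu
        have haeq : aIdx k u = xh + 1 := k_inj hk ha1 (by omega) (by rw [hau])
        have hmeq : mIdx k v = xt + 2 := by
          have hmem : (xt + 2) ∈ {n : ℕ | 1 ≤ n ∧ k n ≤ v} := ⟨by omega, by omega⟩
          have hle : mIdx k v ≤ xt + 2 := Nat.sInf_le hmem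
          have hge : xt + 2 ≤ mIdx k v := by
            by_contra h
            push_neg at h
            obtain ⟨hm1, hkmle⟩ := mIdx_mem hk v
            have : k (xt + 1) ≤ k (mIdx k v) := k_mono hk (mIdx k v) (xt + 1) hm1 (by omega)
            omega
          omega
        simp only [mayaF, haeq, hmeq]
        have e1 : xh + 1 - 1 = xh := by omega
        have e2 : (u + (xh + 1 : ℕ) - c).toNat = yh := by
          push_cast
          omega
        have e3 : xt + 2 - 2 = xt := by omega
        have e4 : (((xt + 2 : ℕ) : ℤ) + v - 1 - c).toNat = yt := by
          push_cast
          omega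
        rw [e1, e2, e3, e4]
    · rintro ⟨u, v⟩ ⟨hu, hv, hvu⟩
      exact (hfacts u v hu hv hvu).2

end
end

section
/- Let k, k' ∈ ℤ with k ≡ k' (mod l). Then in the q-wedge space ∧² V(z): u_k ∧ u_{k'} = − u_{k'} ∧ u_k. In particular u_k ∧ u_k = 0. -/
set_option maxHeartbeats 1000000

set_option synthInstance.maxHeartbeats 400000

set_option maxHeartbeats 4000000

set_option synthInstance.maxHeartbeats 1000000

noncomputable section

open MvPolynomial

attribute [local instance] Classical.propDecidable

/-- The coefficient field `K = ℚ(σ,τ)`. -/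
abbrev KK := FractionRing (MvPolynomial (Fin 2) ℚ)

/-- `σ = s^{1/2}`. -/
def σK : KK := algebraMap (MvPolynomial (Fin 2) ℚ) KK (X 0)

/-- `τ = t^{1/2}`. -/
def τK : KK := algebraMap (MvPolynomial (Fin 2) ℚ) KK (X 1)

/-- `q = στ`. -/
def qK : KK := σK * τK

/-- The field `K(z_1, …, z_N)` of rational functions in `N` further variables
(variables are indexed `0, …, N-1` here). -/
abbrev FF (N : ℕ) := FractionRing (MvPolynomial (Fin N) KK)

/-- Scalars of `K` inside `K(z_1,…,z_N)`. -/
def kc {N : ℕ} (c : KK) : FF N := algebraMap KK (FF N) c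

/-- The variable `z_a` (0-based index). -/
def zvarF (N : ℕ) (a : ℕ) : FF N :=
  if h : a < N then algebraMap (MvPolynomial (Fin N) KK) (FF N) (X ⟨a, h⟩) else 0

/-- Lift an algebra equivalence of the polynomial ring to the fraction field. -/
def liftEquiv {N : ℕ} (φ : MvPolynomial (Fin N) KK ≃ₐ[KK] MvPolynomial (Fin N) KK) :
    FF N ≃ₐ[KK] FF N :=
  IsFractionRing.algEquivOfAlgEquiv φ

def swPerm (N a b : ℕ) : Equiv.Perm (Fin N) :=
  if h : a < N ∧ b < N then Equiv.swap ⟨a, h.1⟩ ⟨b, h.2⟩ else 1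

/-- `σ_{ab}` : the `K`-algebra automorphism of `K(z_1,…,z_N)` exchanging `z_a` and `z_b`. -/
def swF (N a b : ℕ) : FF N → FF N :=
  liftEquiv (renameEquiv KK (swPerm N a b))

/-- `g_{ab} f = ((q⁻¹ z_a - q z_b)/(z_a - z_b)) (σ_{ab} f - f) + q f`. -/
def gF (N a b : ℕ) : FF N → FF N := fun f =>
  ((kc qK⁻¹ * zvarF N a - kc qK * zvarF N b) / (zvarF N a - zvarF N b)) * (swF N a b f - f)
    + kc qK * f

/-- `T_a = (q²-1)·id - q·g_{a,a+1}` (0-based: couples `z_a` and `z_{a+1}`). -/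
def TF (N a : ℕ) : FF N → FF N := fun f => kc (qK ^ 2 - 1) * f - kc qK * gF N a (a + 1) f

/-- The Laurent polynomial subring `K[z_1^{±1},…,z_N^{±1}]` of `K(z_1,…,z_N)`. -/
def Laurent (N : ℕ) : Subalgebra KK (FF N) :=
  Algebra.adjoin KK
    (Set.range (fun a : Fin N => zvarF N a) ∪ Set.range (fun a : Fin N => (zvarF N a)⁻¹))

/-- The monomial `z^m = z_1^{m_1} ⋯ z_N^{m_N}`. -/
def zmon {N : ℕ} (m : Fin N → ℤ) : FF N := ∏ a : Fin N, zvarF N a ^ m a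

lemma zvar_mem {N : ℕ} (a : Fin N) : zvarF N (a : ℕ) ∈ Laurent N :=
  Algebra.subset_adjoin (Or.inl ⟨a, rfl⟩)

lemma zvar_inv_mem {N : ℕ} (a : Fin N) : (zvarF N (a : ℕ))⁻¹ ∈ Laurent N :=
  Algebra.subset_adjoin (Or.inr ⟨a, rfl⟩)

lemma zvar_zpow_mem {N : ℕ} (a : Fin N) (n : ℤ) : zvarF N (a : ℕ) ^ n ∈ Laurent N := by
  rcases le_or_gt 0 n with h | h
  · lift n to ℕ using h
    rw [zpow_natCast]
    exact pow_mem (zvar_mem a) n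
  · obtain ⟨k, rfl⟩ : ∃ k : ℕ, n = -(k : ℤ) := ⟨n.natAbs, by omega⟩
    rw [zpow_neg, zpow_natCast, ← inv_pow]
    exact pow_mem (zvar_inv_mem a) k

lemma zmon_mem {N : ℕ} (m : Fin N → ℤ) : zmon m ∈ Laurent N :=
  Submonoid.prod_mem _ (fun a _ => zvar_zpow_mem a (m a))

/-- `V^{⊗N}`, realized as the free `K`-module on the set of multi-indices `(j_1,…,j_N)`. -/
abbrev WT (l N : ℕ) := (Fin N → Fin l) → KK

/-- The basis vector `v_{j_1} ⊗ ⋯ ⊗ v_{j_N}`. -/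
def eW {l N : ℕ} (j : Fin N → Fin l) : WT l N := Pi.single j 1

def vTvec (l N a : ℕ) (j : Fin N → Fin l) : WT l N :=
  if h : a + 1 < N then
    let ia : Fin N := ⟨a, Nat.lt_of_succ_lt h⟩
    let ib : Fin N := ⟨a + 1, h⟩
    let j' : Fin N → Fin l := j ∘ Equiv.swap ia ib
    if j ia = j ib then qK ^ 2 • eW j
    else if j ia < j ib then qK • eW j'
    else qK • eW j' + (qK ^ 2 - 1) • eW j
  else 0

/-- `vT_a = 1^{⊗a-1} ⊗ vT ⊗ 1^{⊗N-a-1}` (0-based: acts on slots `a`, `a+1`). -/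
def vTop (l N a : ℕ) : WT l N →ₗ[KK] WT l N :=
  Module.Basis.constr (Pi.basisFun KK (Fin N → Fin l)) KK (vTvec l N a)

open scoped TensorProduct

/-- `K[z_1^{±1},…,z_N^{±1}] ⊗_K V^{⊗N}`. -/
abbrev LW (l N : ℕ) := (Laurent N) ⊗[KK] (WT l N)

/-- The sum of the images of the operators `T_a ⊗ id - id ⊗ vT_a`. -/
def wedgeRel (l N : ℕ) : Submodule KK (LW l N) :=
  Submodule.span KK
    { v | ∃ a : ℕ, a + 1 < N ∧ ∃ (x : Laurent N) (w : WT l N)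
        (hx : TF N a (x : FF N) ∈ Laurent N),
        v = (⟨TF N a (x : FF N), hx⟩ : Laurent N) ⊗ₜ[KK] w - x ⊗ₜ[KK] (vTop l N a w) }

/-- The q-wedge space `∧^N V(z)`. -/
abbrev QW (l N : ℕ) :=
  @HasQuotient.Quotient (LW l N) (Submodule KK (LW l N))
    (@Submodule.hasQuotient KK (LW l N) _ _ _) (wedgeRel l N)

/-- `[Φ ⊗ v_{j_1} ⊗ ⋯ ⊗ v_{j_N}]` for a Laurent polynomial `Φ`. -/
def wedgeOf {l N : ℕ} (Φ : FF N) (hΦ : Φ ∈ Laurent N) (j : Fin N → Fin l) : QW l N :=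
  Submodule.Quotient.mk ((⟨Φ, hΦ⟩ : Laurent N) ⊗ₜ[KK] eW j)

def jOf (l : ℕ) (k : ℤ) : ℕ := (k % (l : ℤ)).toNat

def mOf (l : ℕ) (k : ℤ) : ℤ := (k % (l : ℤ) - k) / (l : ℤ) - 1

def jFin (l : ℕ) (hl : 0 < l) (k : ℤ) : Fin l :=
  ⟨jOf l k, by
    have hl' : (0 : ℤ) < (l : ℤ) := by exact_mod_cast hl
    have h1 : 0 ≤ k % (l : ℤ) := Int.emod_nonneg k hl'.ne'
    have h2 : k % (l : ℤ) < l := Int.emod_lt_of_pos k hl'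
    simp only [jOf]
    omega⟩

/-- The wedge `u_{k_1} ∧ ⋯ ∧ u_{k_N}`. -/
def uwedge (l N : ℕ) (hl : 0 < l) (k : Fin N → ℤ) : QW l N :=
  Submodule.Quotient.mk ((⟨zmon (fun a => mOf l (k a)), zmon_mem _⟩ : Laurent N)
    ⊗ₜ[KK] eW (fun a => jFin l hl (k a)))


/-! ### Auxiliary lemmas -/

lemma kk_injective : Function.Injective (algebraMap (MvPolynomial (Fin 2) ℚ) KK) :=
  IsFractionRing.injective _ _

lemma one_add_q_sq_ne : (1 + qK ^ 2 : KK) ≠ 0 := by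
  have h : (1 + qK ^ 2 : KK) = algebraMap (MvPolynomial (Fin 2) ℚ) KK (1 + (X 0 * X 1) ^ 2) := by
    simp [qK, σK, τK, map_add, map_pow, map_one, map_mul]
  rw [h]
  intro hc
  have h0 : (1 + (X 0 * X 1) ^ 2 : MvPolynomial (Fin 2) ℚ) = 0 := by
    apply kk_injective
    rw [hc, map_zero]
  have := congrArg (MvPolynomial.eval (fun _ => (0:ℚ))) h0
  simp at this

lemma two_ne_zero_KK : (2 : KK) ≠ 0 := by
  intro hc
  have h0 : algebraMap (MvPolynomial (Fin 2) ℚ) KK 2 = algebraMap (MvPolynomial (Fin 2) ℚ) KK 0 := by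
    rw [map_ofNat, map_zero]; exact hc
  have h2 := kk_injective h0
  have h3 : (C (2:ℚ) : MvPolynomial (Fin 2) ℚ) = C 0 := by
    rw [map_ofNat, map_zero]; exact h2
  exact (by norm_num : (2:ℚ) ≠ 0) (MvPolynomial.C_injective (Fin 2) ℚ h3)

lemma vTop_eW (l N a : ℕ) (j : Fin N → Fin l) : vTop l N a (eW j) = vTvec l N a j := by
  have h : eW j = Pi.basisFun KK (Fin N → Fin l) j := by
    simp [eW]
  rw [vTop, h, Module.Basis.constr_basis]

lemma vTop_eW_diag (l : ℕ) (j : Fin 2 → Fin l) (hj : j 0 = j 1) :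
    vTop l 2 0 (eW j) = (qK ^ 2) • eW j := by
  rw [vTop_eW]
  have h2 : (0:ℕ) + 1 < 2 := by norm_num
  simp only [vTvec, dif_pos h2]
  rw [if_pos]
  exact hj

lemma swF_zvar0 : swF 2 0 1 (zvarF 2 0) = zvarF 2 1 := by
  have h01 : ((0:ℕ) < 2 ∧ (1:ℕ) < 2) := by norm_num
  simp only [swF, liftEquiv, zvarF, swPerm, dif_pos (by norm_num : (0:ℕ) < 2),
    dif_pos (by norm_num : (1:ℕ) < 2), dif_pos h01]
  rw [IsFractionRing.algEquivOfAlgEquiv_algebraMap]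
  simp [renameEquiv, Equiv.swap_apply_left]

lemma swF_zvar1 : swF 2 0 1 (zvarF 2 1) = zvarF 2 0 := by
  have h01 : ((0:ℕ) < 2 ∧ (1:ℕ) < 2) := by norm_num
  simp only [swF, liftEquiv, zvarF, swPerm, dif_pos (by norm_num : (0:ℕ) < 2),
    dif_pos (by norm_num : (1:ℕ) < 2), dif_pos h01]
  rw [IsFractionRing.algEquivOfAlgEquiv_algebraMap]
  simp [renameEquiv, Equiv.swap_apply_right]

lemma swF_mul (x y : FF 2) : swF 2 0 1 (x * y) = swF 2 0 1 x * swF 2 0 1 y :=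
  map_mul (liftEquiv (renameEquiv KK (swPerm 2 0 1))) x y

lemma swF_add (x y : FF 2) : swF 2 0 1 (x + y) = swF 2 0 1 x + swF 2 0 1 y :=
  map_add (liftEquiv (renameEquiv KK (swPerm 2 0 1))) x y

lemma swF_zpow (x : FF 2) (n : ℤ) : swF 2 0 1 (x ^ n) = swF 2 0 1 x ^ n :=
  map_zpow₀ (liftEquiv (renameEquiv KK (swPerm 2 0 1)) : FF 2 ≃ₐ[KK] FF 2) x n

lemma swF_kc (c : KK) : swF 2 0 1 (kc c) = kc c :=
  AlgEquiv.commutes (liftEquiv (renameEquiv KK (swPerm 2 0 1))) c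

lemma zmon_two (m : Fin 2 → ℤ) :
    zmon m = zvarF 2 0 ^ m 0 * zvarF 2 1 ^ m 1 := by
  simp [zmon, Fin.prod_univ_two]

lemma swF_zmon (m : Fin 2 → ℤ) :
    swF 2 0 1 (zmon m) = zmon ![m 1, m 0] := by
  rw [zmon_two, zmon_two, swF_mul, swF_zpow, swF_zpow, swF_zvar0, swF_zvar1]
  simp [mul_comm]



lemma mk_symm_zero (l : ℕ) (P : FF 2) (hP : P ∈ Laurent 2)
    (hsw : swF 2 0 1 P = P) (j : Fin 2 → Fin l) (hj : j 0 = j 1) :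
    (Submodule.Quotient.mk ((⟨P, hP⟩ : Laurent 2) ⊗ₜ[KK] eW j) : QW l 2) = 0 := by
  set c : KK := (1 + qK ^ 2)⁻¹ with hc
  set x : FF 2 := kc (-c) * P with hxdef
  clear_value x
  have hxL : x ∈ Laurent 2 := by
    rw [hxdef]; exact mul_mem ((Laurent 2).algebraMap_mem (-c)) hP
  have hswx : swF 2 0 1 x = x := by
    rw [hxdef, swF_mul, swF_kc, hsw]
  have hg : gF 2 0 1 x = kc qK * x := by
    unfold gF
    rw [hswx]
    ring
  have hTF : TF 2 0 x = -x := by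
    unfold TF
    rw [hg]
    have hkc : (kc (qK ^ 2 - 1) : FF 2) = kc qK * kc qK - 1 := by
      simp [kc, map_sub, map_pow, map_one, sq]
    rw [hkc]
    ring
  have hTL : TF 2 0 x ∈ Laurent 2 := by rw [hTF]; exact neg_mem hxL
  have hmk : (Submodule.Quotient.mk ((⟨TF 2 0 x, hTL⟩ : Laurent 2) ⊗ₜ[KK] eW j
      - (⟨x, hxL⟩ : Laurent 2) ⊗ₜ[KK] (vTop l 2 0 (eW j))) : QW l 2) = 0 :=
    (Submodule.Quotient.mk_eq_zero _).2
      (Submodule.subset_span ⟨0, by norm_num, ⟨x, hxL⟩, eW j, hTL, rfl⟩)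
  have hne : (kc (1 + qK ^ 2) : FF 2) ≠ 0 := by
    simp only [kc]
    exact (map_ne_zero _).mpr one_add_q_sq_ne
  have hsub : (⟨TF 2 0 x, hTL⟩ : Laurent 2) - qK ^ 2 • (⟨x, hxL⟩ : Laurent 2)
      = (⟨P, hP⟩ : Laurent 2) := by
    apply Subtype.ext
    simp only [AddSubgroupClass.coe_sub, SetLike.val_smul]
    rw [hTF, Algebra.smul_def, hxdef]
    have hB : (algebraMap KK (FF 2)) (qK ^ 2) = (kc (1 + qK ^ 2) : FF 2) - 1 := by
      simp [kc, map_add, map_one]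
    have hinv : (kc (-c) : FF 2) = - (kc (1 + qK ^ 2) : FF 2)⁻¹ := by
      simp only [kc, hc, map_neg, map_inv₀]
    rw [hB, hinv]
    have hring : -(-(kc (1 + qK ^ 2) : FF 2)⁻¹ * P)
        - ((kc (1 + qK ^ 2) : FF 2) - 1) * (-(kc (1 + qK ^ 2) : FF 2)⁻¹ * P)
        = ((kc (1 + qK ^ 2) : FF 2) * (kc (1 + qK ^ 2) : FF 2)⁻¹) * P := by
      ring
    rw [hring, mul_inv_cancel₀ hne, one_mul]
  have h1 : (⟨x, hxL⟩ : Laurent 2) ⊗ₜ[KK] (vTop l 2 0 (eW j))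
      = (qK ^ 2 • (⟨x, hxL⟩ : Laurent 2)) ⊗ₜ[KK] eW j := by
    rw [vTop_eW_diag l j hj, TensorProduct.tmul_smul, TensorProduct.smul_tmul']
  have key : (⟨TF 2 0 x, hTL⟩ : Laurent 2) ⊗ₜ[KK] eW j
      - (⟨x, hxL⟩ : Laurent 2) ⊗ₜ[KK] (vTop l 2 0 (eW j))
      = (⟨P, hP⟩ : Laurent 2) ⊗ₜ[KK] eW j := by
    rw [h1]
    have hmap := map_sub ((TensorProduct.mk KK (Laurent 2) (WT l 2)).flip (eW j))
      (⟨TF 2 0 x, hTL⟩ : Laurent 2) (qK ^ 2 • (⟨x, hxL⟩ : Laurent 2))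
    calc (⟨TF 2 0 x, hTL⟩ : Laurent 2) ⊗ₜ[KK] eW j
        - (qK ^ 2 • (⟨x, hxL⟩ : Laurent 2)) ⊗ₜ[KK] eW j
        = ((TensorProduct.mk KK (Laurent 2) (WT l 2)).flip (eW j))
            ((⟨TF 2 0 x, hTL⟩ : Laurent 2) - qK ^ 2 • (⟨x, hxL⟩ : Laurent 2)) := hmap.symm
      _ = (⟨P, hP⟩ : Laurent 2) ⊗ₜ[KK] eW j := by
            rw [hsub]
            simp only [LinearMap.flip_apply, TensorProduct.mk_apply]
  rw [key] at hmk
  exact hmk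

theorem stmt15 (l : ℕ) (hl : 0 < l) (k k' : ℤ) (hcong : (l : ℤ) ∣ (k - k')) :
    uwedge l 2 hl ![k, k'] = - uwedge l 2 hl ![k', k] ∧
    uwedge l 2 hl ![k, k] = 0 := by
  have main : ∀ a b : ℤ, (l : ℤ) ∣ (a - b) →
      uwedge l 2 hl ![a, b] = - uwedge l 2 hl ![b, a] := by
    intro a b hab
    have hj : jFin l hl a = jFin l hl b := by
      apply Fin.ext
      simp only [jFin, jOf]
      congr 1
      exact Int.emod_eq_emod_iff_emod_sub_eq_zero.mpr (Int.emod_eq_zero_of_dvd hab)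
    have hf' : (fun i => jFin l hl (![b, a] i)) = (fun i => jFin l hl (![a, b] i)) := by
      funext i
      fin_cases i <;> simp [hj]
    have hf01 : (fun i => jFin l hl (![a, b] i)) 0 = (fun i => jFin l hl (![a, b] i)) 1 := by
      simp [hj]
    have hP : zmon (fun i => mOf l (![a, b] i)) + zmon (fun i => mOf l (![b, a] i))
        ∈ Laurent 2 := add_mem (zmon_mem _) (zmon_mem _)
    have hsw : swF 2 0 1 (zmon (fun i => mOf l (![a, b] i)) + zmon (fun i => mOf l (![b, a] i)))
        = zmon (fun i => mOf l (![a, b] i)) + zmon (fun i => mOf l (![b, a] i)) := by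
      rw [swF_add, swF_zmon, swF_zmon]
      have e1 : ![(fun i => mOf l (![a, b] i)) 1, (fun i => mOf l (![a, b] i)) 0]
          = (fun i => mOf l (![b, a] i)) := by
        funext i; fin_cases i <;> simp
      have e2 : ![(fun i => mOf l (![b, a] i)) 1, (fun i => mOf l (![b, a] i)) 0]
          = (fun i => mOf l (![a, b] i)) := by
        funext i; fin_cases i <;> simp
      rw [e1, e2, add_comm]
    have h0 := mk_symm_zero l _ hP hsw (fun i => jFin l hl (![a, b] i)) hf01
    have hadd : uwedge l 2 hl ![a, b] + uwedge l 2 hl ![b, a] = 0 := by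
      unfold uwedge
      rw [hf']
      rw [← Submodule.Quotient.mk_add]
      have hsplit : ((⟨zmon (fun i => mOf l (![a, b] i)), zmon_mem _⟩ : Laurent 2)
            ⊗ₜ[KK] eW (fun i => jFin l hl (![a, b] i)))
          + ((⟨zmon (fun i => mOf l (![b, a] i)), zmon_mem _⟩ : Laurent 2)
            ⊗ₜ[KK] eW (fun i => jFin l hl (![a, b] i)))
          = (⟨zmon (fun i => mOf l (![a, b] i)) + zmon (fun i => mOf l (![b, a] i)), hP⟩
              : Laurent 2) ⊗ₜ[KK] eW (fun i => jFin l hl (![a, b] i)) :=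
        (TensorProduct.add_tmul _ _ _).symm
      rw [hsplit]
      exact h0
    exact eq_neg_of_add_eq_zero_left hadd
  refine ⟨main k k' hcong, ?_⟩
  have h := main k k (by simp)
  have h2 : (2 : KK) • uwedge l 2 hl ![k, k] = 0 := by
    rw [two_smul]
    nth_rewrite 2 [h]
    exact add_neg_cancel _
  have h3 : uwedge l 2 hl ![k, k] = (2 : KK)⁻¹ • ((2 : KK) • uwedge l 2 hl ![k, k]) := by
    rw [smul_smul, inv_mul_cancel₀ two_ne_zero_KK, one_smul]
  rw [h3, h2, smul_zero]

end
end
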